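/- For every k ≥ 2, the k-fold tensor product E^{⊗k} of a channel E on ℂ^d is an entanglement-breaking channel on (ℂ^d)^{⊗k} if and only if E itself is entanglement-breaking; that is, T_{k-LEB} = T¹_{EB} for all k. -/

import Mathlib

open Matrix
open scoped Kronecker ComplexOrder

/-- A quantum state: a positive semidefinite matrix of unit trace. -/
def IsState {ι : Type} [Fintype ι] (ρ : Matrix ι ι ℂ) : Prop :=
  ρ.PosSemidef ∧ ρ.trace = 1

/-- Separability of a bipartite state across the `ιA | ιB` cut: a finite convex
combination of Kronecker products of states. -/
def IsSep {ιA ιB : Type} [Fintype ιA] [Fintype ιB]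
    (ω : Matrix (ιA × ιB) (ιA × ιB) ℂ) : Prop :=
  ∃ (m : ℕ) (p : Fin m → ℝ) (ξ : Fin m → Matrix ιA ιA ℂ) (ζ : Fin m → Matrix ιB ιB ℂ),
    (∀ j, 0 ≤ p j) ∧ ((∑ j, p j) = 1) ∧ (∀ j, IsState (ξ j)) ∧ (∀ j, IsState (ζ j)) ∧
    ω = ∑ j, (p j : ℂ) • (ξ j ⊗ₖ ζ j)

/-- The extension `E ⊗ id` of a map `E` by a trivial action on an `n`-dimensional ancilla. -/
def tensorId {ι : Type} (E : Matrix ι ι ℂ → Matrix ι ι ℂ) (n : ℕ)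
    (X : Matrix (ι × Fin n) (ι × Fin n) ℂ) : Matrix (ι × Fin n) (ι × Fin n) ℂ :=
  Matrix.of fun p q => E (Matrix.of fun a c => X (a, p.2) (c, q.2)) p.1 q.1

/-- A quantum channel: a linear, trace-preserving, completely positive map. -/
def IsChannel {ι : Type} [Fintype ι] (E : Matrix ι ι ℂ → Matrix ι ι ℂ) : Prop :=
  (∀ (c : ℂ) (X Y : Matrix ι ι ℂ), E (c • X + Y) = c • E X + E Y) ∧
  (∀ X, (E X).trace = X.trace) ∧
  (∀ (n : ℕ) (X : Matrix (ι × Fin n) (ι × Fin n) ℂ), X.PosSemidef → (tensorId E n X).PosSemidef)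

/-- Entanglement-breaking channel: `E ⊗ id` maps every state to a separable state,
for every ancilla dimension `n ≥ 1`. -/
def IsEB {ι : Type} [Fintype ι] (E : Matrix ι ι ℂ → Matrix ι ι ℂ) : Prop :=
  ∀ (n : ℕ), 0 < n → ∀ ω : Matrix (ι × Fin n) (ι × Fin n) ℂ,
    IsState ω → IsSep (tensorId E n ω)

/-- Entanglement-annihilating channel on a bipartite system: every state is mapped
to a separable state. -/
def IsEA {ιA ιB : Type} [Fintype ιA] [Fintype ιB]
    (E : Matrix (ιA × ιB) (ιA × ιB) ℂ → Matrix (ιA × ιB) (ιA × ιB) ℂ) : Prop :=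
  ∀ ω : Matrix (ιA × ιB) (ιA × ιB) ℂ, IsState ω → IsSep (E ω)

/-- The map `F ⊗ id` acting as `F` on the first factor of a bipartite system. -/
def rTensor {ιA ιB : Type} (F : Matrix ιA ιA ℂ → Matrix ιA ιA ℂ)
    (X : Matrix (ιA × ιB) (ιA × ιB) ℂ) : Matrix (ιA × ιB) (ιA × ιB) ℂ :=
  Matrix.of fun p q => F (Matrix.of fun a c => X (a, p.2) (c, q.2)) p.1 q.1

/-- The map `id ⊗ F` acting as `F` on the second factor of a bipartite system. -/
def lTensor {ιA ιB : Type} (F : Matrix ιB ιB ℂ → Matrix ιB ιB ℂ)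
    (X : Matrix (ιA × ιB) (ιA × ιB) ℂ) : Matrix (ιA × ιB) (ιA × ιB) ℂ :=
  Matrix.of fun p q => F (Matrix.of fun b d => X (p.1, b) (q.1, d)) p.2 q.2

/-- The local map `E ⊗ F` on a bipartite system (for linear `E`, `F` this is the
usual tensor product map `(id ⊗ F) ∘ (E ⊗ id)`). -/
def tensorMap {ιA ιB : Type} (E : Matrix ιA ιA ℂ → Matrix ιA ιA ℂ)
    (F : Matrix ιB ιB ℂ → Matrix ιB ιB ℂ)
    (X : Matrix (ιA × ιB) (ιA × ιB) ℂ) : Matrix (ιA × ιB) (ιA × ιB) ℂ :=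
  lTensor F (rTensor E X)

/-- `k`-fold Kronecker product of single-particle matrices. -/
def kronPow {d k : ℕ} (ρ : Fin k → Matrix (Fin d) (Fin d) ℂ) :
    Matrix (Fin k → Fin d) (Fin k → Fin d) ℂ :=
  Matrix.of fun i j => ∏ t, ρ t (i t) (j t)

/-- Full separability of a `k`-partite state: a finite convex combination of
`k`-fold Kronecker products of single-particle states. -/
def IsFullySep {d k : ℕ} (ω : Matrix (Fin k → Fin d) (Fin k → Fin d) ℂ) : Prop :=
  ∃ (m : ℕ) (p : Fin m → ℝ) (ρ : Fin m → Fin k → Matrix (Fin d) (Fin d) ℂ),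
    (∀ j, 0 ≤ p j) ∧ ((∑ j, p j) = 1) ∧ (∀ j t, IsState (ρ j t)) ∧
    ω = ∑ j, (p j : ℂ) • kronPow (ρ j)

/-- The map applying `E` to the `t`-th particle of a `k`-partite system. -/
def applyAt {d k : ℕ} (E : Matrix (Fin d) (Fin d) ℂ → Matrix (Fin d) (Fin d) ℂ) (t : Fin k)
    (X : Matrix (Fin k → Fin d) (Fin k → Fin d) ℂ) :
    Matrix (Fin k → Fin d) (Fin k → Fin d) ℂ :=
  Matrix.of fun i j =>
    E (Matrix.of fun a b => X (Function.update i t a) (Function.update j t b)) (i t) (j t)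

/-- The `k`-fold tensor power `E ⊗ ⋯ ⊗ E` of a single-particle map `E`,
obtained by applying `E` to each of the `k` particles. -/
def tensorPow {d : ℕ} (E : Matrix (Fin d) (Fin d) ℂ → Matrix (Fin d) (Fin d) ℂ) (k : ℕ)
    (X : Matrix (Fin k → Fin d) (Fin k → Fin d) ℂ) :
    Matrix (Fin k → Fin d) (Fin k → Fin d) ℂ :=
  (List.finRange k).foldr (applyAt E) X

/-- The qubit depolarizing channel `E_λ[X] = λ X + (1-λ) tr(X) I/2`. -/
noncomputable def depol (lam : ℝ) (X : Matrix (Fin 2) (Fin 2) ℂ) : Matrix (Fin 2) (Fin 2) ℂ :=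
  (lam : ℂ) • X + ((1 - lam : ℝ) : ℂ) • X.trace • ((2 : ℂ)⁻¹ • (1 : Matrix (Fin 2) (Fin 2) ℂ))

/-- The maximally entangled two-qubit vector `(|00⟩ + |11⟩)/√2`. -/
noncomputable def psiPlus : (Fin 2 × Fin 2) → ℂ :=
  fun p => if p.1 = p.2 then ((Real.sqrt 2 : ℝ) : ℂ)⁻¹ else 0

/-- The projection onto the maximally entangled two-qubit vector. -/
noncomputable def Pplus : Matrix (Fin 2 × Fin 2) (Fin 2 × Fin 2) ℂ :=
  Matrix.vecMulVec psiPlus (star psiPlus)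

/-- Partial transposition on the second qubit of a two-qubit matrix. -/
def ptB (X : Matrix (Fin 2 × Fin 2) (Fin 2 × Fin 2) ℂ) :
    Matrix (Fin 2 × Fin 2) (Fin 2 × Fin 2) ℂ :=
  Matrix.of fun p q => X (p.1, q.2) (q.1, p.2)

/-- Partial transposition on the first factor (qubit 1 versus qubits 2,3). -/
def pt1 (X : Matrix (Fin 2 × Fin 2 × Fin 2) (Fin 2 × Fin 2 × Fin 2) ℂ) :
    Matrix (Fin 2 × Fin 2 × Fin 2) (Fin 2 × Fin 2 × Fin 2) ℂ :=
  Matrix.of fun p q => X (q.1, p.2) (p.1, q.2)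

/-- The three-qubit GHZ vector `(|000⟩ + |111⟩)/√2`. -/
noncomputable def ghzVec : (Fin 2 × Fin 2 × Fin 2) → ℂ :=
  fun p => if p.1 = p.2.1 ∧ p.2.1 = p.2.2 then ((Real.sqrt 2 : ℝ) : ℂ)⁻¹ else 0

/-- The three-qubit GHZ state `|GHZ⟩⟨GHZ|`. -/
noncomputable def ghzState : Matrix (Fin 2 × Fin 2 × Fin 2) (Fin 2 × Fin 2 × Fin 2) ℂ :=
  Matrix.vecMulVec ghzVec (star ghzVec)


-- ### Linearity machinery

def LinM {ι κ : Type} (F : Matrix ι ι ℂ → Matrix κ κ ℂ) : Prop :=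
  ∀ (c : ℂ) (X Y : Matrix ι ι ℂ), F (c • X + Y) = c • F X + F Y

namespace LinM

variable {ι κ : Type} {F : Matrix ι ι ℂ → Matrix κ κ ℂ}

theorem zero (h : LinM F) : F 0 = 0 := by
  have := h (-1) 0 0
  simpa using this

theorem add (h : LinM F) (X Y : Matrix ι ι ℂ) : F (X + Y) = F X + F Y := by
  simpa using h 1 X Y

theorem smul (h : LinM F) (c : ℂ) (X : Matrix ι ι ℂ) : F (c • X) = c • F X := by
  simpa [h.zero] using h c X 0

theorem map_sum {β : Type} (h : LinM F) (s : Finset β) (f : β → Matrix ι ι ℂ) :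
    F (∑ j ∈ s, f j) = ∑ j ∈ s, F (f j) := by
  classical
  induction s using Finset.induction with
  | empty => simpa using h.zero
  | insert _ _ hx ih =>
    rw [Finset.sum_insert hx, Finset.sum_insert hx, h.add, ih]

theorem map_smul_sum {β : Type} (h : LinM F) (s : Finset β) (c : β → ℂ)
    (f : β → Matrix ι ι ℂ) :
    F (∑ j ∈ s, c j • f j) = ∑ j ∈ s, c j • F (f j) := by
  rw [h.map_sum]
  exact Finset.sum_congr rfl fun j _ => h.smul _ _

end LinM

theorem linM_tensorId {ι : Type} {F : Matrix ι ι ℂ → Matrix ι ι ℂ} (h : LinM F) (n : ℕ) :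
    LinM (tensorId F n) := by
  intro c X Y
  ext p q
  have hinner : (Matrix.of fun a b => (c • X + Y) (a, p.2) (b, q.2)) =
      c • (Matrix.of fun a b => X (a, p.2) (b, q.2)) +
        (Matrix.of fun a b => Y (a, p.2) (b, q.2)) := by
    ext a b; simp [Matrix.add_apply, Matrix.smul_apply]
  calc tensorId F n (c • X + Y) p q
      = F (Matrix.of fun a b => (c • X + Y) (a, p.2) (b, q.2)) p.1 q.1 := rfl
    _ = F (c • (Matrix.of fun a b => X (a, p.2) (b, q.2)) +
          (Matrix.of fun a b => Y (a, p.2) (b, q.2))) p.1 q.1 := by rw [hinner]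
    _ = (c • tensorId F n X + tensorId F n Y) p q := by
          rw [h]; simp [tensorId, Matrix.add_apply, Matrix.smul_apply]

theorem linM_applyAt {d k : ℕ} {F : Matrix (Fin d) (Fin d) ℂ → Matrix (Fin d) (Fin d) ℂ}
    (h : LinM F) (t : Fin k) : LinM (applyAt F t) := by
  intro c X Y
  ext i j
  have hinner : (Matrix.of fun a b => (c • X + Y) (Function.update i t a) (Function.update j t b)) =
      c • (Matrix.of fun a b => X (Function.update i t a) (Function.update j t b)) +
        (Matrix.of fun a b => Y (Function.update i t a) (Function.update j t b)) := by
    ext a b; simp [Matrix.add_apply, Matrix.smul_apply]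
  calc applyAt F t (c • X + Y) i j
      = F (Matrix.of fun a b => (c • X + Y) (Function.update i t a) (Function.update j t b))
          (i t) (j t) := rfl
    _ = (c • applyAt F t X + applyAt F t Y) i j := by
          rw [hinner, h]; simp [applyAt, Matrix.add_apply, Matrix.smul_apply]

theorem linM_foldr {ι τ : Type} (f : τ → Matrix ι ι ℂ → Matrix ι ι ℂ)
    (hf : ∀ t, LinM (f t)) (l : List τ) : LinM (fun X => l.foldr f X) := by
  induction l with
  | nil => intro c X Y; simp
  | cons a l ih =>
    intro c X Y
    simp only [List.foldr_cons]
    rw [show List.foldr f (c • X + Y) l = (fun X => List.foldr f X l) (c • X + Y) from rfl,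
      ih c X Y, hf a c]

theorem tensorId_comp {ι : Type} (F G : Matrix ι ι ℂ → Matrix ι ι ℂ) (n : ℕ)
    (X : Matrix (ι × Fin n) (ι × Fin n) ℂ) :
    tensorId (fun Z => F (G Z)) n X = tensorId F n (tensorId G n X) := rfl

theorem tensorId_id {ι : Type} (n : ℕ) (X : Matrix (ι × Fin n) (ι × Fin n) ℂ) :
    tensorId (fun Z => Z) n X = X := rfl

theorem tensorId_foldr {d k : ℕ} (E : Matrix (Fin d) (Fin d) ℂ → Matrix (Fin d) (Fin d) ℂ)
    (n : ℕ) (l : List (Fin k)) (X : Matrix ((Fin k → Fin d) × Fin n) ((Fin k → Fin d) × Fin n) ℂ) :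
    tensorId (fun Z => l.foldr (applyAt E) Z) n X
      = l.foldr (fun t Y => tensorId (applyAt E t) n Y) X := by
  induction l generalizing X with
  | nil => rfl
  | cons a l ih =>
    simp only [List.foldr_cons]
    rw [show (fun Z => applyAt E a (l.foldr (applyAt E) Z)) =
      (fun Z => (applyAt E a) ((fun W => l.foldr (applyAt E) W) Z)) from rfl,
      tensorId_comp, ih]

-- ### State lemmas

theorem isState_submatrix_equiv {ι κ : Type} [Fintype ι] [Fintype κ] [DecidableEq ι]
    [DecidableEq κ] (e : κ ≃ ι) {ρ : Matrix ι ι ℂ} (h : IsState ρ) :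
    IsState (ρ.submatrix e e) := by
  refine ⟨h.1.submatrix e, ?_⟩
  rw [← h.2]
  simp only [Matrix.trace, Matrix.diag, Matrix.submatrix_apply]
  exact Equiv.sum_comp e fun i => ρ i i

theorem kron_conjTranspose {ι κ : Type} (A : Matrix ι ι ℂ) (B : Matrix κ κ ℂ) :
    (A ⊗ₖ B)ᴴ = Aᴴ ⊗ₖ Bᴴ := by
  ext p q
  simp [Matrix.conjTranspose_apply, Matrix.kroneckerMap_apply, star_mul', mul_comm]

theorem isState_kron {ι κ : Type} [Fintype ι] [Fintype κ] [DecidableEq ι] [DecidableEq κ]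
    {A : Matrix ι ι ℂ} {B : Matrix κ κ ℂ} (hA : IsState A) (hB : IsState B) :
    IsState (A ⊗ₖ B) := by
  constructor
  · exact hA.1.kronecker hB.1
  · rw [Matrix.trace_kronecker, hA.2, hB.2, mul_one]

-- ### Convex combinations of separable states

theorem isSep_conv {ιA ιB : Type} [Fintype ιA] [Fintype ιB] (m : ℕ) (p : Fin m → ℝ)
    (ω : Fin m → Matrix (ιA × ιB) (ιA × ιB) ℂ)
    (hp : ∀ j, 0 ≤ p j) (hs : (∑ j, p j) = 1) (h : ∀ j, IsSep (ω j)) :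
    IsSep (∑ j, (p j : ℂ) • ω j) := by
  classical
  choose mm q ξ ζ hq hqs hξ hζ hdec using h
  let T := Σ j : Fin m, Fin (mm j)
  let e : T ≃ Fin (Fintype.card T) := Fintype.equivFin T
  refine ⟨Fintype.card T, fun i => p (e.symm i).1 * q _ (e.symm i).2,
    fun i => ξ _ (e.symm i).2, fun i => ζ _ (e.symm i).2,
    fun i => mul_nonneg (hp _) (hq _ _), ?_, fun i => hξ _ _, fun i => hζ _ _, ?_⟩
  · rw [Equiv.sum_comp e.symm (fun x : T => p x.1 * q x.1 x.2),
      ← Finset.univ_sigma_univ, Finset.sum_sigma]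
    calc (∑ j, ∑ l, p j * q j l) = ∑ j, p j * ∑ l, q j l := by
          simp [Finset.mul_sum]
      _ = 1 := by simp only [hqs, mul_one, hs]
  · rw [Equiv.sum_comp e.symm
      (fun x : T => ((p x.1 * q x.1 x.2 : ℝ) : ℂ) • (ξ x.1 x.2 ⊗ₖ ζ x.1 x.2)),
      ← Finset.univ_sigma_univ, Finset.sum_sigma]
    refine Finset.sum_congr rfl fun j _ => ?_
    rw [hdec j, Finset.smul_sum]
    refine Finset.sum_congr rfl fun l _ => ?_
    rw [smul_smul]
    push_cast
    rfl

-- ### Direction ←: tensor powers of EB channels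

/-- Splitting off the last slot. -/
def eSnoc (d k : ℕ) : (Fin (k + 1) → Fin d) ≃ (Fin d × (Fin k → Fin d)) where
  toFun f := (f (Fin.last k), Fin.init f)
  invFun p := Fin.snoc p.2 p.1
  left_inv f := by simp [Fin.snoc_init_self]
  right_inv p := by simp [Fin.snoc_last, Fin.init_snoc]

def tailLift {d k n : ℕ} (ξ : Matrix (Fin d) (Fin d) ℂ)
    (Z : Matrix ((Fin k → Fin d) × Fin n) ((Fin k → Fin d) × Fin n) ℂ) :
    Matrix ((Fin (k + 1) → Fin d) × Fin n) ((Fin (k + 1) → Fin d) × Fin n) ℂ :=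
  Matrix.of fun p q => ξ (p.1 (Fin.last k)) (q.1 (Fin.last k)) *
    Z (Fin.init p.1, p.2) (Fin.init q.1, q.2)

theorem linM_tailLift {d k n : ℕ} (ξ : Matrix (Fin d) (Fin d) ℂ) :
    LinM (tailLift (k := k) (n := n) ξ) := by
  intro c X Y
  ext p q
  simp [tailLift, Matrix.add_apply, Matrix.smul_apply, mul_add, smul_eq_mul]
  ring

theorem tailLift_kron {d k n : ℕ} (ξ : Matrix (Fin d) (Fin d) ℂ)
    (η : Matrix (Fin k → Fin d) (Fin k → Fin d) ℂ) (θ : Matrix (Fin n) (Fin n) ℂ) :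
    tailLift ξ (η ⊗ₖ θ) = ((ξ ⊗ₖ η).submatrix (eSnoc d k) (eSnoc d k)) ⊗ₖ θ := by
  ext p q
  simp [tailLift, Matrix.kroneckerMap_apply, Matrix.submatrix_apply, eSnoc]
  ring

theorem tailLift_step {d k n : ℕ} {E : Matrix (Fin d) (Fin d) ℂ → Matrix (Fin d) (Fin d) ℂ}
    (hE : LinM E) (t : Fin k) (ξ : Matrix (Fin d) (Fin d) ℂ)
    (Z : Matrix ((Fin k → Fin d) × Fin n) ((Fin k → Fin d) × Fin n) ℂ) :
    tensorId (applyAt E t.castSucc) n (tailLift ξ Z)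
      = tailLift ξ (tensorId (applyAt E t) n Z) := by
  ext p q
  obtain ⟨f, r⟩ := p
  obtain ⟨f', r'⟩ := q
  have hne : t.castSucc ≠ Fin.last k := (Fin.castSucc_lt_last t).ne
  have hinner : (Matrix.of fun a b =>
      tailLift ξ Z (Function.update f t.castSucc a, r) (Function.update f' t.castSucc b, r'))
      = (ξ (f (Fin.last k)) (f' (Fin.last k))) •
        (Matrix.of fun a b =>
          Z (Function.update (Fin.init f) t a, r) (Function.update (Fin.init f') t b, r')) := by
    ext a b
    simp only [tailLift, Matrix.of_apply, Matrix.smul_apply, smul_eq_mul]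
    rw [Function.update_of_ne hne.symm, Function.update_of_ne hne.symm,
      Fin.init_update_castSucc, Fin.init_update_castSucc]
  calc tensorId (applyAt E t.castSucc) n (tailLift ξ Z) (f, r) (f', r')
      = E (Matrix.of fun a b =>
          tailLift ξ Z (Function.update f t.castSucc a, r) (Function.update f' t.castSucc b, r'))
          (f t.castSucc) (f' t.castSucc) := rfl
    _ = tailLift ξ (tensorId (applyAt E t) n Z) (f, r) (f', r') := by
        rw [hinner, hE.smul]
        simp only [Matrix.smul_apply, smul_eq_mul, tailLift, Matrix.of_apply]
        rfl

theorem tailLift_foldr {d k n : ℕ} {E : Matrix (Fin d) (Fin d) ℂ → Matrix (Fin d) (Fin d) ℂ}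
    (hE : LinM E) (l : List (Fin k)) (ξ : Matrix (Fin d) (Fin d) ℂ)
    (Z : Matrix ((Fin k → Fin d) × Fin n) ((Fin k → Fin d) × Fin n) ℂ) :
    l.foldr (fun t Y => tensorId (applyAt E t.castSucc) n Y) (tailLift ξ Z)
      = tailLift ξ (l.foldr (fun t Y => tensorId (applyAt E t) n Y) Z) := by
  induction l with
  | nil => rfl
  | cons a l ih => simp only [List.foldr_cons, ih, tailLift_step hE]

def eBig (d k n m : ℕ) (eB : ((Fin k → Fin d) × Fin n) ≃ Fin m) :
    ((Fin (k + 1) → Fin d) × Fin n) ≃ (Fin d × Fin m) where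
  toFun p := (p.1 (Fin.last k), eB (Fin.init p.1, p.2))
  invFun q := (Fin.snoc (eB.symm q.2).1 q.1, (eB.symm q.2).2)
  left_inv p := by
    obtain ⟨f, r⟩ := p
    simp [Fin.snoc_init_self]
  right_inv q := by
    obtain ⟨c, u⟩ := q
    simp [Fin.snoc_last, Fin.init_snoc]

theorem kron_eBig {d k n m : ℕ} (eB : ((Fin k → Fin d) × Fin n) ≃ Fin m)
    (ξ : Matrix (Fin d) (Fin d) ℂ) (ζ : Matrix (Fin m) (Fin m) ℂ) :
    (ξ ⊗ₖ ζ).submatrix (eBig d k n m eB) (eBig d k n m eB) = tailLift ξ (ζ.submatrix eB eB) := by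
  ext ⟨f, r⟩ ⟨f', r'⟩
  rfl

theorem tensorId_last_reindex {d k n m : ℕ}
    (E : Matrix (Fin d) (Fin d) ℂ → Matrix (Fin d) (Fin d) ℂ)
    (eB : ((Fin k → Fin d) × Fin n) ≃ Fin m)
    (ω : Matrix ((Fin (k + 1) → Fin d) × Fin n) ((Fin (k + 1) → Fin d) × Fin n) ℂ) :
    tensorId E m (ω.submatrix (eBig d k n m eB).symm (eBig d k n m eB).symm)
      = (tensorId (applyAt E (Fin.last k)) n ω).submatrix
          (eBig d k n m eB).symm (eBig d k n m eB).symm := by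
  ext ⟨c, u⟩ ⟨c', u'⟩
  show E (Matrix.of fun a b =>
      ω ((eBig d k n m eB).symm (a, u)) ((eBig d k n m eB).symm (b, u'))) c c' = _
  have hsymm : ∀ (a : Fin d) (u : Fin m), (eBig d k n m eB).symm (a, u)
      = (Fin.snoc (eB.symm u).1 a, (eB.symm u).2) := fun _ _ => rfl
  simp only [Matrix.submatrix_apply, hsymm]
  show _ = applyAt E (Fin.last k) (Matrix.of fun fA fC =>
      ω (fA, (eB.symm u).2) (fC, (eB.symm u').2)) (Fin.snoc (eB.symm u).1 c) (Fin.snoc (eB.symm u').1 c')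
  show _ = E (Matrix.of fun a b =>
      ω (Function.update (Fin.snoc (eB.symm u).1 c) (Fin.last k) a, (eB.symm u).2)
        (Function.update (Fin.snoc (eB.symm u').1 c') (Fin.last k) b, (eB.symm u').2))
      ((Fin.snoc (eB.symm u).1 c : Fin (k+1) → Fin d) (Fin.last k))
      ((Fin.snoc (eB.symm u').1 c' : Fin (k+1) → Fin d) (Fin.last k))
  rw [Fin.snoc_last, Fin.snoc_last]
  congr 1
  ext a b
  simp [Fin.update_snoc_last]

set_option maxHeartbeats 1600000 in
theorem isEB_tensorPow {d : ℕ} {E : Matrix (Fin d) (Fin d) ℂ → Matrix (Fin d) (Fin d) ℂ}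
    (hlin : LinM E) (hEB : IsEB E) : ∀ k, IsEB (tensorPow E k) := by
  intro k
  induction k with
  | zero =>
    intro n hn ω hω
    haveI : Unique (Fin 0 → Fin d) := ⟨⟨fun i => i.elim0⟩, fun f => funext fun i => i.elim0⟩
    have h0 : tensorPow E 0 = fun Z => Z := by
      funext Z; simp [tensorPow]
    rw [show tensorId (tensorPow E 0) n ω = ω by rw [h0]; exact tensorId_id n ω]
    let u0 : Fin 0 → Fin d := default
    let e : Fin n ≃ ((Fin 0 → Fin d) × Fin n) :=
      ⟨fun a => (u0, a), fun p => p.2, fun a => rfl,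
        fun p => by obtain ⟨f, a⟩ := p; simp [Subsingleton.elim u0 f]⟩
    refine ⟨1, fun _ => 1, fun _ => 1, fun _ => ω.submatrix e e, fun _ => zero_le_one, by simp,
      fun _ => ⟨Matrix.PosSemidef.one, by simp [Matrix.trace_one]⟩,
      fun _ => isState_submatrix_equiv e hω, ?_⟩
    ext ⟨f, a⟩ ⟨f', b⟩
    simp only [Finset.univ_unique, Finset.sum_singleton, Complex.ofReal_one, one_smul,
      Matrix.kroneckerMap_apply, Matrix.submatrix_apply]
    rw [Subsingleton.elim f f', Matrix.one_apply_eq]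
    show ω (f', a) (f', b) = 1 * ω (u0, a) (u0, b)
    rw [Subsingleton.elim f' u0, one_mul]
  | succ k ih =>
    intro n hn ω hω
    rcases Nat.eq_zero_or_pos d with hd | hd
    · exfalso
      subst hd
      haveI : IsEmpty (Fin (k + 1) → Fin 0) := ⟨fun f => (f 0).elim0⟩
      have h0 : ω.trace = 0 := by
        rw [Matrix.trace]
        simp [Finset.univ_eq_empty]
      rw [hω.2] at h0
      exact one_ne_zero h0
    · haveI : Nonempty (Fin d) := ⟨⟨0, hd⟩⟩
      haveI : Nonempty (Fin n) := ⟨⟨0, hn⟩⟩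
      set m := Fintype.card ((Fin k → Fin d) × Fin n) with hm
      have hmpos : 0 < m := Fintype.card_pos
      let eB : ((Fin k → Fin d) × Fin n) ≃ Fin m := Fintype.equivFin _
      let e := eBig d k n m eB
      have hω' : IsState (ω.submatrix e.symm e.symm) := isState_submatrix_equiv e.symm hω
      obtain ⟨mJ, p, ξ, ζ, hp, hps, hξ, hζ, hdec⟩ := hEB m hmpos _ hω'
      have key : tensorId (applyAt E (Fin.last k)) n ω
          = ∑ j, (p j : ℂ) • tailLift (ξ j) ((ζ j).submatrix eB eB) := by
        have h2 : (tensorId (applyAt E (Fin.last k)) n ω).submatrix e.symm e.symm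
            = ∑ j, (p j : ℂ) • (ξ j ⊗ₖ ζ j) := by
          rw [← tensorId_last_reindex E eB ω]
          exact hdec
        have h3 := congrArg (fun M => M.submatrix e e) h2
        simp only [Matrix.submatrix_submatrix] at h3
        rw [Equiv.symm_comp_self, Matrix.submatrix_id_id] at h3
        rw [h3]
        ext pq pq'
        simp only [Matrix.submatrix_apply, Matrix.sum_apply, Matrix.smul_apply]
        refine Finset.sum_congr rfl fun j _ => ?_
        rw [← Matrix.submatrix_apply (ξ j ⊗ₖ ζ j) e e, kron_eBig]
      have main : tensorId (tensorPow E (k + 1)) n ω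
          = ∑ j, (p j : ℂ) •
              tailLift (ξ j) (tensorId (tensorPow E k) n ((ζ j).submatrix eB eB)) := by
        calc tensorId (tensorPow E (k + 1)) n ω
            = (List.finRange (k + 1)).foldr (fun t Y => tensorId (applyAt E t) n Y) ω :=
              tensorId_foldr E n _ ω
          _ = (List.finRange k).foldr (fun t Y => tensorId (applyAt E t.castSucc) n Y)
                (tensorId (applyAt E (Fin.last k)) n ω) := by
              rw [List.finRange_succ_last, List.foldr_append, List.foldr_map]
              rfl
          _ = ∑ j, (p j : ℂ) •
                (List.finRange k).foldr (fun t Y => tensorId (applyAt E t.castSucc) n Y)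
                  (tailLift (ξ j) ((ζ j).submatrix eB eB)) := by
              rw [key]
              exact (linM_foldr _ (fun t => linM_tensorId (linM_applyAt hlin t.castSucc) n)
                (List.finRange k)).map_smul_sum (Finset.univ : Finset (Fin mJ)) _ _
          _ = ∑ j, (p j : ℂ) •
              tailLift (ξ j) (tensorId (tensorPow E k) n ((ζ j).submatrix eB eB)) := by
              refine Finset.sum_congr rfl fun j _ => ?_
              rw [tailLift_foldr hlin]
              rw [← tensorId_foldr E n (List.finRange k) ((ζ j).submatrix eB eB)]
              rfl
      rw [main]
      refine isSep_conv mJ p _ hp hps fun j => ?_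
      have hζ' : IsState ((ζ j).submatrix eB eB) := isState_submatrix_equiv eB (hζ j)
      obtain ⟨mL, q, η, θ, hq, hqs, hη, hθ, hdec2⟩ := ih n hn _ hζ'
      refine ⟨mL, q, fun l => (ξ j ⊗ₖ η l).submatrix (eSnoc d k) (eSnoc d k), θ, hq, hqs,
        fun l => isState_submatrix_equiv (eSnoc d k) (isState_kron (hξ j) (hη l)), hθ, ?_⟩
      rw [hdec2, (linM_tailLift (ξ j)).map_smul_sum]
      exact Finset.sum_congr rfl fun l _ => by rw [tailLift_kron]

-- ### Direction →: from tensor power EB to single-copy EB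

section Forward

variable {d k n : ℕ}

def iota (t0 : Fin k) (z : Fin d) (u : Fin d × Fin n) : (Fin k → Fin d) × Fin n :=
  (Function.update (fun _ => z) t0 u.1, u.2)

def Vmat (t0 : Fin k) (z : Fin d) (n : ℕ) :
    Matrix (Fin d × Fin n) ((Fin k → Fin d) × Fin n) ℂ :=
  Matrix.of fun u p => if p = iota t0 z u then 1 else 0

def genEmb (t0 : Fin k) (τ : Fin k → Matrix (Fin d) (Fin d) ℂ)
    (Y : Matrix (Fin d × Fin n) (Fin d × Fin n) ℂ) :
    Matrix ((Fin k → Fin d) × Fin n) ((Fin k → Fin d) × Fin n) ℂ :=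
  Matrix.of fun p q => Y (p.1 t0, p.2) (q.1 t0, q.2) *
    ∏ t ∈ Finset.univ.erase t0, τ t (p.1 t) (q.1 t)

def sigma0 (z : Fin d) : Matrix (Fin d) (Fin d) ℂ :=
  Matrix.of fun a b => if a = z ∧ b = z then 1 else 0

theorem trace_sigma0 (z : Fin d) : (sigma0 z).trace = 1 := by
  rw [Matrix.trace]
  simp [Matrix.diag, sigma0, Finset.sum_ite_eq']

theorem upd_char (t0 : Fin k) (z : Fin d) (f : Fin k → Fin d) :
    f = Function.update (fun _ => z) t0 (f t0) ↔ ∀ t, t ≠ t0 → f t = z := by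
  constructor
  · intro h t ht
    conv_lhs => rw [h]
    simp [Function.update_of_ne ht]
  · intro h
    funext t
    by_cases ht : t = t0
    · subst ht; simp
    · simp [Function.update_of_ne ht, h t ht]

theorem iota_fst_t0 (t0 : Fin k) (z : Fin d) (u : Fin d × Fin n) :
    (iota t0 z u).1 t0 = u.1 := by simp [iota]

theorem Vmat_mul_conjTranspose (t0 : Fin k) (z : Fin d) :
    Vmat t0 z n * (Vmat t0 z n)ᴴ = 1 := by
  ext u w
  rw [Matrix.mul_apply]
  have hterm : ∀ p, Vmat t0 z n u p * (Vmat t0 z n)ᴴ p w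
      = if p = iota t0 z u then (if iota t0 z u = iota t0 z w then 1 else 0) else 0 := by
    intro p
    simp only [Vmat, Matrix.of_apply, Matrix.conjTranspose_apply]
    by_cases h1 : p = iota t0 z u
    · rw [h1]
      by_cases h2 : iota t0 z u = iota t0 z w <;> simp [h2]
    · simp [h1]
  rw [Finset.sum_congr rfl fun p _ => hterm p, Finset.sum_ite_eq' Finset.univ (iota t0 z u)]
  have hinj : iota t0 z u = iota t0 z w ↔ u = w := by
    constructor
    · intro h
      have h1 := congrArg (fun x => x.1 t0) h
      have h2 := congrArg Prod.snd h
      simp only [iota, Function.update_self] at h1 h2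
      exact Prod.ext h1 h2
    · intro h; rw [h]
  by_cases h : u = w
  · subst h; simp [Matrix.one_apply_eq]
  · simp [h, hinj, Matrix.one_apply_ne h]

theorem genEmb_eq (t0 : Fin k) (z : Fin d) (Y : Matrix (Fin d × Fin n) (Fin d × Fin n) ℂ) :
    (Vmat t0 z n)ᴴ * Y * Vmat t0 z n = genEmb t0 (fun _ => sigma0 z) Y := by
  ext p q
  have hG : ∀ pp : (Fin k → Fin d) × Fin n, Decidable
      (pp.1 = Function.update (fun _ => z) t0 (pp.1 t0)) := fun pp => inferInstance
  -- inner sum over u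
  have hA : ∀ (pp : (Fin k → Fin d) × Fin n) (v : Fin d × Fin n),
      (∑ u : Fin d × Fin n, (Vmat t0 z n)ᴴ pp u * Y u v)
        = (if pp.1 = Function.update (fun _ => z) t0 (pp.1 t0) then 1 else 0)
            * Y (pp.1 t0, pp.2) v := by
    intro pp v
    have hterm : ∀ u, (Vmat t0 z n)ᴴ pp u * Y u v
        = if u = (pp.1 t0, pp.2) then
            (if pp.1 = Function.update (fun _ => z) t0 (pp.1 t0) then 1 else 0) * Y u v
          else 0 := by
      intro u
      simp only [Vmat, Matrix.conjTranspose_apply, Matrix.of_apply]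
      by_cases h1 : pp = iota t0 z u
      · have hu : u = (pp.1 t0, pp.2) := by
          rw [h1, iota_fst_t0]; rfl
        have hGp : pp.1 = Function.update (fun _ => z) t0 (pp.1 t0) := by
          rw [h1, iota_fst_t0]; rfl
        rw [if_pos h1, if_pos hu, if_pos hGp]
        simp
      · rw [if_neg h1]
        simp only [star_zero, zero_mul]
        by_cases hu : u = (pp.1 t0, pp.2)
        · by_cases hGp : pp.1 = Function.update (fun _ => z) t0 (pp.1 t0)
          · exfalso
            apply h1
            have : pp = (Function.update (fun _ => z) t0 (pp.1 t0), pp.2) := Prod.ext hGp rfl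
            rw [this, hu]
            rfl
          · simp [hu, hGp]
        · simp [hu]
    rw [Finset.sum_congr rfl fun u _ => hterm u,
      Finset.sum_ite_eq' Finset.univ ((pp.1 t0, pp.2) : Fin d × Fin n)]
    simp
  -- outer computation
  have lhs_eq : ((Vmat t0 z n)ᴴ * Y * Vmat t0 z n) p q
      = (if p.1 = Function.update (fun _ => z) t0 (p.1 t0) then 1 else 0)
          * ((if q.1 = Function.update (fun _ => z) t0 (q.1 t0) then 1 else 0)
            * Y (p.1 t0, p.2) (q.1 t0, q.2)) := by
    rw [Matrix.mul_apply]
    have hterm2 : ∀ v, ((Vmat t0 z n)ᴴ * Y) p v * Vmat t0 z n v q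
        = if v = (q.1 t0, q.2) then
            (if p.1 = Function.update (fun _ => z) t0 (p.1 t0) then 1 else 0)
              * ((if q.1 = Function.update (fun _ => z) t0 (q.1 t0) then 1 else 0)
                * Y (p.1 t0, p.2) v)
          else 0 := by
      intro v
      rw [Matrix.mul_apply, hA p v]
      simp only [Vmat, Matrix.of_apply]
      by_cases h1 : q = iota t0 z v
      · have hv : v = (q.1 t0, q.2) := by
          rw [h1, iota_fst_t0]; rfl
        have hGq : q.1 = Function.update (fun _ => z) t0 (q.1 t0) := by
          rw [h1, iota_fst_t0]; rfl
        rw [if_pos h1, mul_one, if_pos hv, if_pos hGq, one_mul]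
      · rw [if_neg h1, mul_zero]
        by_cases hv : v = (q.1 t0, q.2)
        · by_cases hGq : q.1 = Function.update (fun _ => z) t0 (q.1 t0)
          · exfalso
            apply h1
            have : q = (Function.update (fun _ => z) t0 (q.1 t0), q.2) := Prod.ext hGq rfl
            rw [this, hv]
            rfl
          · simp [hv, hGq]
        · simp [hv]
    rw [Finset.sum_congr rfl fun v _ => hterm2 v,
      Finset.sum_ite_eq' Finset.univ ((q.1 t0, q.2) : Fin d × Fin n)]
    simp
  rw [lhs_eq]
  -- now compute the RHS product
  simp only [genEmb, Matrix.of_apply, sigma0, Matrix.of_apply]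
  rw [Finset.prod_boole]
  have hiff : (∀ t ∈ Finset.univ.erase t0, (p.1 t = z ∧ q.1 t = z)) ↔
      ((p.1 = Function.update (fun _ => z) t0 (p.1 t0))
        ∧ (q.1 = Function.update (fun _ => z) t0 (q.1 t0))) := by
    rw [upd_char, upd_char]
    constructor
    · intro h
      exact ⟨fun t ht => (h t (Finset.mem_erase.mpr ⟨ht, Finset.mem_univ t⟩)).1,
        fun t ht => (h t (Finset.mem_erase.mpr ⟨ht, Finset.mem_univ t⟩)).2⟩
    · intro h t ht
      have ht' := (Finset.mem_erase.mp ht).1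
      exact ⟨h.1 t ht', h.2 t ht'⟩
  by_cases h1 : p.1 = Function.update (fun _ => z) t0 (p.1 t0) <;>
    by_cases h2 : q.1 = Function.update (fun _ => z) t0 (q.1 t0)
  · rw [if_pos h1, if_pos h2, if_pos (hiff.mpr ⟨h1, h2⟩)]; ring
  · rw [if_pos h1, if_neg h2, if_neg (fun hc => h2 (hiff.mp hc).2)]; ring
  · rw [if_neg h1, if_pos h2, if_neg (fun hc => h1 (hiff.mp hc).1)]; ring
  · rw [if_neg h1, if_neg h2, if_neg (fun hc => h1 (hiff.mp hc).1)]; ring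

end Forward

section Forward2

variable {d k n : ℕ}

theorem isState_genEmb (t0 : Fin k) (z : Fin d)
    {Y : Matrix (Fin d × Fin n) (Fin d × Fin n) ℂ} (hY : IsState Y) :
    IsState (genEmb t0 (fun _ => sigma0 z) Y) := by
  rw [← genEmb_eq]
  constructor
  · exact hY.1.conjTranspose_mul_mul_same (Vmat t0 z n)
  · rw [Matrix.trace_mul_cycle, Vmat_mul_conjTranspose, Matrix.one_mul, hY.2]

theorem genEmb_applyAt_ne {E : Matrix (Fin d) (Fin d) ℂ → Matrix (Fin d) (Fin d) ℂ}
    (hlin : LinM E) {t0 t : Fin k} (ht : t ≠ t0)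
    (τ : Fin k → Matrix (Fin d) (Fin d) ℂ) (Y : Matrix (Fin d × Fin n) (Fin d × Fin n) ℂ) :
    tensorId (applyAt E t) n (genEmb t0 τ Y)
      = genEmb t0 (Function.update τ t (E (τ t))) Y := by
  have htmem : t ∈ Finset.univ.erase t0 := Finset.mem_erase.mpr ⟨ht, Finset.mem_univ t⟩
  ext ⟨f, r⟩ ⟨f', r'⟩
  have hinner : (Matrix.of fun a b =>
      genEmb t0 τ Y (Function.update f t a, r) (Function.update f' t b, r'))
      = (Y (f t0, r) (f' t0, r') *
          ∏ s ∈ (Finset.univ.erase t0).erase t, τ s (f s) (f' s)) • τ t := by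
    ext a b
    simp only [genEmb, Matrix.of_apply, Matrix.smul_apply, smul_eq_mul]
    rw [Function.update_of_ne ht.symm, Function.update_of_ne ht.symm,
      ← Finset.mul_prod_erase _ _ htmem]
    rw [Finset.prod_congr rfl fun s hs => ?_]
    · simp only [Function.update_self]
      ring
    · rw [Function.update_of_ne (Finset.mem_erase.mp hs).1,
        Function.update_of_ne (Finset.mem_erase.mp hs).1]
  calc tensorId (applyAt E t) n (genEmb t0 τ Y) (f, r) (f', r')
      = E (Matrix.of fun a b =>
          genEmb t0 τ Y (Function.update f t a, r) (Function.update f' t b, r')) (f t) (f' t) := rfl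
    _ = genEmb t0 (Function.update τ t (E (τ t))) Y (f, r) (f', r') := by
        rw [hinner, hlin.smul]
        simp only [Matrix.smul_apply, smul_eq_mul, genEmb, Matrix.of_apply]
        rw [← Finset.mul_prod_erase _ _ htmem, Function.update_self]
        rw [Finset.prod_congr rfl fun s hs =>
          show Function.update τ t (E (τ t)) s (f s) (f' s) = τ s (f s) (f' s) by
            rw [Function.update_of_ne (Finset.mem_erase.mp hs).1]]
        ring

theorem genEmb_applyAt_eq {E : Matrix (Fin d) (Fin d) ℂ → Matrix (Fin d) (Fin d) ℂ}
    (hlin : LinM E) (t0 : Fin k)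
    (τ : Fin k → Matrix (Fin d) (Fin d) ℂ) (Y : Matrix (Fin d × Fin n) (Fin d × Fin n) ℂ) :
    tensorId (applyAt E t0) n (genEmb t0 τ Y)
      = genEmb t0 τ (tensorId E n Y) := by
  ext ⟨f, r⟩ ⟨f', r'⟩
  have hinner : (Matrix.of fun a b =>
      genEmb t0 τ Y (Function.update f t0 a, r) (Function.update f' t0 b, r'))
      = (∏ s ∈ Finset.univ.erase t0, τ s (f s) (f' s)) •
          (Matrix.of fun a b => Y (a, r) (b, r')) := by
    ext a b
    simp only [genEmb, Matrix.of_apply, Matrix.smul_apply, smul_eq_mul]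
    rw [Function.update_self, Function.update_self]
    rw [Finset.prod_congr rfl fun s hs => ?_]
    · ring
    · rw [Function.update_of_ne (Finset.mem_erase.mp hs).1,
        Function.update_of_ne (Finset.mem_erase.mp hs).1]
  calc tensorId (applyAt E t0) n (genEmb t0 τ Y) (f, r) (f', r')
      = E (Matrix.of fun a b =>
          genEmb t0 τ Y (Function.update f t0 a, r) (Function.update f' t0 b, r'))
          (f t0) (f' t0) := rfl
    _ = genEmb t0 τ (tensorId E n Y) (f, r) (f', r') := by
        rw [hinner, hlin.smul]
        simp only [Matrix.smul_apply, smul_eq_mul, genEmb, Matrix.of_apply]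
        rw [show tensorId E n Y (f t0, r) (f' t0, r')
          = E (Matrix.of fun a b => Y (a, r) (b, r')) (f t0) (f' t0) from rfl]
        ring

theorem genEmb_foldr {E : Matrix (Fin d) (Fin d) ℂ → Matrix (Fin d) (Fin d) ℂ}
    (hlin : LinM E) (t0 : Fin k) (l : List (Fin k)) (hl : l.Nodup)
    (τ : Fin k → Matrix (Fin d) (Fin d) ℂ) (Y : Matrix (Fin d × Fin n) (Fin d × Fin n) ℂ) :
    l.foldr (fun t Z => tensorId (applyAt E t) n Z) (genEmb t0 τ Y)
      = genEmb t0 (fun t => if t ∈ l ∧ t ≠ t0 then E (τ t) else τ t)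
          (if t0 ∈ l then tensorId E n Y else Y) := by
  induction l with
  | nil => simp [genEmb]
  | cons a l ih =>
    obtain ⟨ha, hl'⟩ := List.nodup_cons.mp hl
    rw [List.foldr_cons, ih hl']
    by_cases hat : a = t0
    · subst hat
      rw [if_neg (fun h => ha h), genEmb_applyAt_eq hlin]
      have h1 : (fun t => if t ∈ l ∧ t ≠ a then E (τ t) else τ t)
          = fun t => if t ∈ a :: l ∧ t ≠ a then E (τ t) else τ t := by
        funext t
        by_cases ht : t = a
        · simp [ht]
        · simp [List.mem_cons, ht]
      rw [h1, if_pos (List.mem_cons_self)]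
    · rw [genEmb_applyAt_ne hlin hat]
      have h2 : (if a ∈ l ∧ a ≠ t0 then E (τ a) else τ a) = τ a := by
        simp [ha]
      have h3 : Function.update (fun t => if t ∈ l ∧ t ≠ t0 then E (τ t) else τ t) a
            (E (if a ∈ l ∧ a ≠ t0 then E (τ a) else τ a))
          = fun t => if t ∈ a :: l ∧ t ≠ t0 then E (τ t) else τ t := by
        funext t
        by_cases ht : t = a
        · subst ht
          rw [Function.update_self, h2, if_pos ⟨List.mem_cons_self, hat⟩]
        · rw [Function.update_of_ne ht]
          simp only [List.mem_cons]
          by_cases htl : t ∈ l ∧ t ≠ t0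
          · rw [if_pos htl, if_pos ⟨Or.inr htl.1, htl.2⟩]
          · rw [if_neg htl, if_neg (fun hc => htl ⟨hc.1.resolve_left ht, hc.2⟩)]
      rw [h3]
      have hat' : t0 ≠ a := fun h => hat h.symm
      have h4 : (t0 ∈ a :: l) ↔ (t0 ∈ l) := by
        simp [List.mem_cons, hat']
      by_cases ht0 : t0 ∈ l
      · rw [if_pos ht0, if_pos (h4.mpr ht0)]
      · rw [if_neg ht0, if_neg (fun hc => ht0 (h4.mp hc))]

end Forward2

section Forward3

variable {d k n : ℕ}

noncomputable def PTr (t0 : Fin k)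
    (X : Matrix ((Fin k → Fin d) × Fin n) ((Fin k → Fin d) × Fin n) ℂ) :
    Matrix (Fin d × Fin n) (Fin d × Fin n) ℂ :=
  Matrix.of fun u w => (d : ℂ)⁻¹ *
    ∑ g : Fin k → Fin d, X (Function.update g t0 u.1, u.2) (Function.update g t0 w.1, w.2)

theorem linM_PTr (t0 : Fin k) : LinM (PTr (d := d) (n := n) t0) := by
  intro c X Y
  ext u w
  simp only [PTr, Matrix.of_apply, Matrix.add_apply, Matrix.smul_apply, smul_eq_mul,
]
  rw [Finset.sum_add_distrib, ← Finset.mul_sum]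
  ring

theorem PTr_genEmb (hd : d ≠ 0) (t0 : Fin k) (τ : Fin k → Matrix (Fin d) (Fin d) ℂ)
    (hτ : ∀ t, t ≠ t0 → (τ t).trace = 1)
    (Y : Matrix (Fin d × Fin n) (Fin d × Fin n) ℂ) :
    PTr t0 (genEmb t0 τ Y) = Y := by
  ext ⟨c, r⟩ ⟨c', r'⟩
  show (d : ℂ)⁻¹ * ∑ g : Fin k → Fin d,
      genEmb t0 τ Y (Function.update g t0 c, r) (Function.update g t0 c', r') = Y (c, r) (c', r')
  have hterm : ∀ g : Fin k → Fin d,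
      genEmb t0 τ Y (Function.update g t0 c, r) (Function.update g t0 c', r')
        = Y (c, r) (c', r') * ∏ t ∈ Finset.univ.erase t0, τ t (g t) (g t) := by
    intro g
    simp only [genEmb, Matrix.of_apply, Function.update_self]
    congr 1
    refine Finset.prod_congr rfl fun s hs => ?_
    rw [Function.update_of_ne (Finset.mem_erase.mp hs).1,
      Function.update_of_ne (Finset.mem_erase.mp hs).1]
  rw [Finset.sum_congr rfl fun g _ => hterm g, ← Finset.mul_sum]
  have hsum : (∑ g : Fin k → Fin d, ∏ t ∈ Finset.univ.erase t0, τ t (g t) (g t)) = (d : ℂ) := by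
    have h1 : ∀ g : Fin k → Fin d, (∏ t ∈ Finset.univ.erase t0, τ t (g t) (g t))
        = ∏ t, (if t = t0 then 1 else τ t (g t) (g t)) := by
      intro g
      rw [← Finset.mul_prod_erase Finset.univ _ (Finset.mem_univ t0), if_pos rfl, one_mul]
      refine Finset.prod_congr rfl fun s hs => ?_
      rw [if_neg (Finset.mem_erase.mp hs).1]
    rw [Finset.sum_congr rfl fun g _ => h1 g]
    have h2 := (Fintype.prod_sum (κ := fun _ : Fin k => Fin d)
      (fun t v => if t = t0 then (1 : ℂ) else τ t v v)).symm
    rw [show (∑ g : Fin k → Fin d, ∏ t, if t = t0 then (1:ℂ) else τ t (g t) (g t))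
      = ∑ g : Fin k → Fin d, ∏ t, (fun t v => if t = t0 then (1:ℂ) else τ t v v) t (g t) from rfl,
      h2]
    rw [← Finset.mul_prod_erase Finset.univ _ (Finset.mem_univ t0)]
    have h3 : (∑ v : Fin d, if t0 = t0 then (1 : ℂ) else τ t0 v v) = (d : ℂ) := by
      simp
    have h4 : (∏ t ∈ Finset.univ.erase t0, ∑ v : Fin d, if t = t0 then (1:ℂ) else τ t v v) = 1 := by
      refine Finset.prod_eq_one fun t ht => ?_
      rw [Finset.sum_congr rfl fun v _ => if_neg (Finset.mem_erase.mp ht).1]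
      exact hτ t (Finset.mem_erase.mp ht).1
    rw [h3, h4, mul_one]
  rw [hsum]
  have : (d : ℂ) ≠ 0 := Nat.cast_ne_zero.mpr hd
  field_simp

noncomputable def ptrA (t0 : Fin k) (ξ : Matrix (Fin k → Fin d) (Fin k → Fin d) ℂ) :
    Matrix (Fin d) (Fin d) ℂ :=
  Matrix.of fun a b => (d : ℂ)⁻¹ *
    ∑ g : Fin k → Fin d, ξ (Function.update g t0 a) (Function.update g t0 b)

def Wmat (t0 : Fin k) (g : Fin k → Fin d) : Matrix (Fin d) (Fin k → Fin d) ℂ :=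
  Matrix.of fun a f => if f = Function.update g t0 a then 1 else 0

theorem Wmat_entry (t0 : Fin k) (g : Fin k → Fin d)
    (ξ : Matrix (Fin k → Fin d) (Fin k → Fin d) ℂ) (a b : Fin d) :
    (Wmat t0 g * ξ * (Wmat t0 g)ᴴ) a b
      = ξ (Function.update g t0 a) (Function.update g t0 b) := by
  rw [Matrix.mul_apply]
  have h1 : ∀ f', (Wmat t0 g * ξ) a f' * (Wmat t0 g)ᴴ f' b
      = if f' = Function.update g t0 b then (Wmat t0 g * ξ) a f' else 0 := by
    intro f'
    simp only [Wmat, Matrix.conjTranspose_apply, Matrix.of_apply]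
    by_cases h : f' = Function.update g t0 b <;> simp [h]
  rw [Finset.sum_congr rfl fun f' _ => h1 f', Finset.sum_ite_eq' Finset.univ]
  simp only [Finset.mem_univ, if_pos]
  rw [Matrix.mul_apply]
  have h2 : ∀ f, Wmat t0 g a f * ξ f (Function.update g t0 b)
      = if f = Function.update g t0 a then ξ f (Function.update g t0 b) else 0 := by
    intro f
    simp only [Wmat, Matrix.of_apply]
    by_cases h : f = Function.update g t0 a <;> simp [h]
  rw [Finset.sum_congr rfl fun f _ => h2 f, Finset.sum_ite_eq' Finset.univ]
  simp

theorem ptrA_eq (t0 : Fin k) (ξ : Matrix (Fin k → Fin d) (Fin k → Fin d) ℂ) :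
    ptrA t0 ξ = (d : ℂ)⁻¹ • ∑ g : Fin k → Fin d, Wmat t0 g * ξ * (Wmat t0 g)ᴴ := by
  ext a b
  simp only [ptrA, Matrix.of_apply, Matrix.smul_apply, Matrix.sum_apply, smul_eq_mul]
  rw [Finset.sum_congr rfl fun g _ => Wmat_entry t0 g ξ a b]

theorem posSemidef_sum {ι β : Type} [Fintype ι] (s : Finset β) (M : β → Matrix ι ι ℂ)
    (h : ∀ i ∈ s, (M i).PosSemidef) : (∑ i ∈ s, M i).PosSemidef := by
  classical
  induction s using Finset.induction with
  | empty => simpa using Matrix.PosSemidef.zero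
  | insert _ _ hx ih =>
    rw [Finset.sum_insert hx]
    exact (h _ (Finset.mem_insert_self _ _)).add
      (ih fun i hi => h i (Finset.mem_insert_of_mem hi))

theorem posSemidef_real_smul {ι : Type} [Fintype ι] {M : Matrix ι ι ℂ} (hM : M.PosSemidef)
    {r : ℝ} (hr : 0 ≤ r) : ((r : ℂ) • M).PosSemidef := by
  constructor
  · rw [Matrix.IsHermitian, Matrix.conjTranspose_smul, hM.1.eq]
    congr 1
    simp [Complex.conj_ofReal]
  · intro x
    exact (hM.smul (a := (r : ℂ)) (Complex.zero_le_real.mpr hr)).2 x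

theorem isState_ptrA (hd : d ≠ 0) (t0 : Fin k)
    {ξ : Matrix (Fin k → Fin d) (Fin k → Fin d) ℂ} (hξ : IsState ξ) :
    IsState (ptrA t0 ξ) := by
  constructor
  · rw [ptrA_eq, show ((d : ℂ)⁻¹) = (((d : ℝ)⁻¹ : ℝ) : ℂ) by push_cast; ring]
    exact posSemidef_real_smul
      (posSemidef_sum Finset.univ _ fun g _ => hξ.1.mul_mul_conjTranspose_same (Wmat t0 g))
      (by positivity)
  · rw [Matrix.trace]
    simp only [Matrix.diag, ptrA, Matrix.of_apply]
    rw [← Finset.mul_sum]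
    let e2 : (Fin d × (Fin k → Fin d)) ≃ (Fin d × (Fin k → Fin d)) :=
      ⟨fun p => (p.2 t0, Function.update p.2 t0 p.1),
       fun p => (p.2 t0, Function.update p.2 t0 p.1),
       fun p => by
        obtain ⟨u, g⟩ := p
        simp [Function.update_idem, Function.update_self, Function.update_eq_self],
       fun p => by
        obtain ⟨u, g⟩ := p
        simp [Function.update_idem, Function.update_self, Function.update_eq_self]⟩
    have hswap : (∑ a : Fin d, ∑ g : Fin k → Fin d,
        ξ (Function.update g t0 a) (Function.update g t0 a))
        = (d : ℂ) * ξ.trace := by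
      rw [← Fintype.sum_prod_type']
      have := Equiv.sum_comp e2
        (fun p : Fin d × (Fin k → Fin d) => ξ (Function.update p.2 t0 p.1) (Function.update p.2 t0 p.1))
      rw [← this]
      have hterm : ∀ p : Fin d × (Fin k → Fin d),
          ξ (Function.update (e2 p).2 t0 (e2 p).1) (Function.update (e2 p).2 t0 (e2 p).1)
            = ξ p.2 p.2 := by
        intro p
        obtain ⟨u, g⟩ := p
        show ξ (Function.update (Function.update g t0 u) t0 (g t0))
            (Function.update (Function.update g t0 u) t0 (g t0)) = ξ g g
        rw [Function.update_idem, Function.update_eq_self]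
      rw [Fintype.sum_congr _ _ hterm, Fintype.sum_prod_type]
      rw [Matrix.trace]
      simp [Matrix.diag, Finset.sum_const, Finset.card_univ, Finset.mul_sum, nsmul_eq_mul]
    rw [hswap, hξ.2, mul_one]
    have : (d : ℂ) ≠ 0 := Nat.cast_ne_zero.mpr hd
    field_simp

theorem PTr_kron (t0 : Fin k) (ξ : Matrix (Fin k → Fin d) (Fin k → Fin d) ℂ)
    (ζ : Matrix (Fin n) (Fin n) ℂ) :
    PTr t0 (ξ ⊗ₖ ζ) = ptrA t0 ξ ⊗ₖ ζ := by
  ext ⟨c, r⟩ ⟨c', r'⟩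
  simp only [PTr, ptrA, Matrix.of_apply, Matrix.kroneckerMap_apply]
  rw [← Finset.sum_mul]
  ring

end Forward3

theorem isEB_of_tensorPow {d k : ℕ} (hk : 0 < k)
    {E : Matrix (Fin d) (Fin d) ℂ → Matrix (Fin d) (Fin d) ℂ}
    (hlin : LinM E) (htr : ∀ X, (E X).trace = X.trace)
    (hbig : IsEB (tensorPow E k)) : IsEB E := by
  intro n hn ω hω
  rcases Nat.eq_zero_or_pos d with hd | hd
  · exfalso
    subst hd
    haveI : IsEmpty (Fin 0 × Fin n) := inferInstance
    have h0 : ω.trace = 0 := by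
      rw [Matrix.trace]
      simp [Finset.univ_eq_empty]
    rw [hω.2] at h0
    exact one_ne_zero h0
  · set t0 : Fin k := ⟨0, hk⟩ with ht0
    set z : Fin d := ⟨0, hd⟩ with hz
    have hstate := isState_genEmb (n := n) t0 z hω
    obtain ⟨mJ, p, ξ, ζ, hp, hps, hξ, hζ, hdec⟩ := hbig n hn _ hstate
    have hcomp : PTr t0 (tensorId (tensorPow E k) n (genEmb t0 (fun _ => sigma0 z) ω))
        = tensorId E n ω := by
      rw [show tensorId (tensorPow E k) n (genEmb t0 (fun _ => sigma0 z) ω)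
          = (List.finRange k).foldr (fun t Z => tensorId (applyAt E t) n Z)
              (genEmb t0 (fun _ => sigma0 z) ω)
        from tensorId_foldr E n _ _]
      rw [genEmb_foldr hlin t0 _ (List.nodup_finRange k) _ ω]
      rw [if_pos (List.mem_finRange t0)]
      exact PTr_genEmb hd.ne' t0 _ (fun t ht => by
        rw [if_pos ⟨List.mem_finRange t, ht⟩, htr, trace_sigma0]) _
    rw [← hcomp, hdec,
      (linM_PTr t0).map_smul_sum Finset.univ (fun j => ((p j : ℝ) : ℂ))
        (fun j => ξ j ⊗ₖ ζ j)]
    refine ⟨mJ, p, fun j => ptrA t0 (ξ j), ζ, hp, hps,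
      fun j => isState_ptrA hd.ne' t0 (hξ j), hζ, ?_⟩
    exact Finset.sum_congr rfl fun j _ => by rw [PTr_kron]


/-- For every `k ≥ 2`, the `k`-fold tensor power of a channel `E` is
entanglement-breaking if and only if `E` itself is entanglement-breaking;
that is, `T_{k-LEB} = T¹_{EB}`. -/
theorem stmt_12 (d : ℕ)
    (E : Matrix (Fin d) (Fin d) ℂ → Matrix (Fin d) (Fin d) ℂ)
    (hE : IsChannel E) :
    ∀ k : ℕ, 2 ≤ k → (IsEB (tensorPow E k) ↔ IsEB E) := by
  
  intro k hk
  constructor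
  · intro hbig
    exact isEB_of_tensorPow (by omega) hE.1 hE.2.1 hbig
  · intro hEB
    exact isEB_tensorPow hE.1 hEB k
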